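/- For the homogeneous heterodimer ODE system with k12*k0/k1 > k1t, the diseased equilibrium (k1t/k12, (k12*k0 - k1*k1t)/(k12*k1t)) is linearly asymptotically stable: the Jacobian there has trace strictly negative and determinant strictly positive. -/

import Mathlib

/-- If `k12*k0 > k1*k1t`, the diseased equilibrium
`(k1t/k12, (k12*k0 - k1*k1t)/(k12*k1t))` of the homogeneous heterodimer system
is linearly asymptotically stable: the Jacobian there has strictly negative
trace and strictly positive determinant. -/
theorem heterodimer_diseased_stable (k0 k1 k1t k12 : ℝ)
    (hk0 : 0 < k0) (hk1 : 0 < k1) (hk1t : 0 < k1t) (hk12 : 0 < k12)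
    (hgrow : k12 * k0 > k1 * k1t) :
    -- Jacobian of (p,q) ↦ (-k1*p - k12*p*q + k0, -k1t*q + k12*p*q)
    -- at p* = k1t/k12, q* = (k12*k0 - k1*k1t)/(k12*k1t)
    let p' : ℝ := k1t / k12
    let q' : ℝ := (k12 * k0 - k1 * k1t) / (k12 * k1t)
    let J : Matrix (Fin 2) (Fin 2) ℝ :=
      !![-k1 - k12 * q', -k12 * p';
         k12 * q', -k1t + k12 * p']
    J.trace < 0 ∧ 0 < J.det := by
  intro p' q' J
  have hp' : 0 < p' := div_pos hk1t hk12
  have hq' : 0 < q' := div_pos (by linarith) (by positivity)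
  constructor
  · simp only [J, Matrix.trace_fin_two_of]
    have hpe : k12 * p' = k1t := by
      simp only [p']; field_simp [ne_of_gt hk12]
    nlinarith [mul_pos hk12 hq']
  · simp only [J, Matrix.det_fin_two_of, p', q']
    have h12 : (k12:ℝ) ≠ 0 := ne_of_gt hk12
    have h1t : (k1t:ℝ) ≠ 0 := ne_of_gt hk1t
    field_simp
    nlinarith [mul_pos hk12 hk1t, mul_pos hk12 hk0, sq_nonneg k12, mul_pos (mul_pos hk12 hk1t) (sub_pos.mpr hgrow)]
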